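/- Suppose there exists a sequence of positive numbers (cₙ) with lim_{n→∞} cₙ^{1/n} = 1 such that for all n and all closed, convex, origin-symmetric A, B ⊆ ℝⁿ we have μₙ(A∩B) ≥ cₙ·μₙ(A)·μₙ(B). Then for all n and all closed, convex, origin-symmetric A, B ⊆ ℝⁿ, μₙ(A∩B) ≥ μₙ(A)·μₙ(B). -/

import Mathlib

open MeasureTheory Real Pointwise
open scoped ENNReal NNReal

noncomputable def stdGaussian (n : ℕ) : Measure (EuclideanSpace ℝ (Fin n)) :=
  volume.withDensity fun x => ENNReal.ofReal ((2 * π) ^ (-(n : ℝ) / 2) * Real.exp (-‖x‖ ^ 2 / 2))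

namespace StdGaussianAux

noncomputable def gDens : ℝ → ℝ≥0∞ :=
  fun t => ENNReal.ofReal ((2 * π) ^ (-(1 : ℝ) / 2) * Real.exp (-t ^ 2 / 2))

lemma measurable_gDens : Measurable gDens := by
  apply Measurable.ennreal_ofReal
  fun_prop

noncomputable def g1 : Measure ℝ := volume.withDensity gDens

lemma g1_eq_gaussianReal : g1 = ProbabilityTheory.gaussianReal 0 1 := by
  rw [ProbabilityTheory.gaussianReal_of_var_ne_zero 0 one_ne_zero]
  unfold g1 gDens ProbabilityTheory.gaussianPDF
  congr 1
  funext t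
  congr 1
  rw [ProbabilityTheory.gaussianPDFReal]
  have h2π : (0:ℝ) ≤ 2 * π := by positivity
  have : ((2:ℝ) * π) ^ (-(1 : ℝ) / 2) = (Real.sqrt (2 * π * (1:NNReal)))⁻¹ := by
    rw [NNReal.coe_one, mul_one, Real.sqrt_eq_rpow, ← Real.rpow_neg h2π]
    norm_num
  rw [this]
  ring_nf
  norm_num

instance : IsProbabilityMeasure g1 := by
  rw [g1_eq_gaussianReal]; infer_instance

lemma lintegral_fin_prod :
    ∀ (k : ℕ) (h : Fin k → ℝ → ℝ≥0∞), (∀ i, Measurable (h i)) →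
    ∫⁻ y, ∏ i, h i (y i) ∂(Measure.pi fun _ : Fin k => (volume : Measure ℝ)) =
      ∏ i, ∫⁻ t, h i t := by
  intro k
  induction k with
  | zero =>
      intro h _
      simp [lintegral_const]
  | succ k ih =>
      intro h hm
      have hp := (measurePreserving_piFinSuccAbove (fun _ : Fin (k + 1) => (volume : Measure ℝ)) 0).symm
      rw [hp.lintegral_map_equiv]
      simp_rw [MeasurableEquiv.piFinSuccAbove_symm_apply, Fin.insertNthEquiv,
        Fin.prod_univ_succ, Fin.insertNth_zero]
      simp only [Fin.zero_succAbove, cast_eq, Function.comp_def, Fin.cons_zero, Fin.cons_succ,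
        Equiv.coe_fn_mk]
      rw [lintegral_prod_mul (f := h 0) (g := fun y : Fin k → ℝ => ∏ i : Fin k, h i.succ (y i))
        ((hm 0).aemeasurable)
        (Measurable.aemeasurable (Finset.measurable_prod Finset.univ fun i _ =>
          (hm i.succ).comp (measurable_pi_apply i))), ih _ fun i => hm i.succ]

lemma pi_withDensity (k : ℕ) :
    Measure.pi (fun _ : Fin k => g1) =
      (Measure.pi fun _ : Fin k => (volume : Measure ℝ)).withDensity
        fun y => ∏ i, gDens (y i) := by
  apply Measure.pi_eq
  intro s hs
  rw [withDensity_apply _ (MeasurableSet.univ_pi hs),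
    ← lintegral_indicator (MeasurableSet.univ_pi hs) _]
  have hind : (Set.univ.pi s).indicator (fun y : Fin k → ℝ => ∏ i, gDens (y i)) =
      fun y => ∏ i, (s i).indicator gDens (y i) := by
    funext y
    by_cases hy : y ∈ Set.univ.pi s
    · rw [Set.indicator_of_mem hy]
      exact Finset.prod_congr rfl fun i _ =>
        (Set.indicator_of_mem (hy i trivial) gDens).symm
    · rw [Set.indicator_of_notMem hy]
      obtain ⟨i, hi⟩ : ∃ i, y i ∉ s i := by simpa [Set.mem_pi] using hy
      exact (Finset.prod_eq_zero (Finset.mem_univ i)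
        (Set.indicator_of_notMem hi gDens)).symm
  rw [hind, lintegral_fin_prod k _ fun i => measurable_gDens.indicator (hs i)]
  
  refine Finset.prod_congr rfl fun i _ => ?_
  rw [lintegral_indicator (hs i) _]
  exact (withDensity_apply _ (hs i)).symm

lemma withDensity_map_equiv {α β : Type*} [MeasurableSpace α] [MeasurableSpace β]
    (μ : Measure α) (e : α ≃ᵐ β) {f : α → ℝ≥0∞} (hf : Measurable f) :
    (μ.withDensity f).map e = (μ.map e).withDensity (f ∘ e.symm) := by
  ext s hs
  rw [Measure.map_apply e.measurable hs, withDensity_apply _ (e.measurable hs),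
    withDensity_apply _ hs, setLIntegral_map hs (hf.comp e.symm.measurable) e.measurable]
  refine setLIntegral_congr_fun (e.measurable hs) (fun x _ => ?_)
  simp

lemma map_stdGaussian (k : ℕ) :
    (stdGaussian k).map ((MeasurableEquiv.toLp 2 (Fin k → ℝ)).symm) =
      Measure.pi (fun _ : Fin k => g1) := by
  have hmd : Measurable fun x : EuclideanSpace ℝ (Fin k) =>
      ENNReal.ofReal ((2 * π) ^ (-(k : ℝ) / 2) * Real.exp (-‖x‖ ^ 2 / 2)) := by
    apply Measurable.ennreal_ofReal
    fun_prop
  rw [stdGaussian, withDensity_map_equiv _ _ hmd,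
    (EuclideanSpace.volume_preserving_symm_measurableEquiv_toLp (Fin k)).map_eq, pi_withDensity k,
    MeasureTheory.volume_pi]
  congr 1
  funext y
  have hcoord : ∀ i, (((MeasurableEquiv.toLp 2 (Fin k → ℝ)).symm).symm y) i = y i := fun i => rfl
  have hnorm : ‖((MeasurableEquiv.toLp 2 (Fin k → ℝ)).symm).symm y‖ ^ 2 = ∑ i, (y i) ^ 2 := by
    rw [EuclideanSpace.norm_eq, Real.sq_sqrt (Finset.sum_nonneg fun i _ => sq_nonneg _)]
    exact Finset.sum_congr rfl fun i _ => by rw [hcoord i, Real.norm_eq_abs, sq_abs]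
  show ENNReal.ofReal _ = _
  rw [hnorm]
  have h2π : (0:ℝ) < 2 * π := by positivity
  have hpow : ((2:ℝ) * π) ^ (-(k : ℝ) / 2) = ∏ _i : Fin k, ((2:ℝ) * π) ^ (-(1:ℝ) / 2) := by
    rw [Finset.prod_const, ← Real.rpow_natCast (((2:ℝ) * π) ^ (-(1:ℝ) / 2)) _,
      ← Real.rpow_mul h2π.le]
    norm_num
    congr 1
    simp [Finset.card_univ]
    ring
  have hexp : Real.exp (-(∑ i, (y i) ^ 2) / 2) = ∏ i, Real.exp (-(y i) ^ 2 / 2) := by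
    rw [← Real.exp_sum]
    congr 1
    rw [← Finset.sum_div, ← Finset.sum_neg_distrib]
  rw [hpow, hexp, ← Finset.prod_mul_distrib,
    ENNReal.ofReal_prod_of_nonneg fun i _ => by positivity]
  rfl

lemma measurePreserving_stdGaussian (k : ℕ) :
    MeasurePreserving ((MeasurableEquiv.toLp 2 (Fin k → ℝ)).symm) (stdGaussian k)
      (Measure.pi fun _ : Fin k => g1) :=
  ⟨((MeasurableEquiv.toLp 2 (Fin k → ℝ)).symm).measurable, map_stdGaussian k⟩

instance isProbability_stdGaussian (k : ℕ) : IsProbabilityMeasure (stdGaussian k) := by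
  constructor
  have h := (measurePreserving_stdGaussian k).measure_preimage MeasurableSet.univ.nullMeasurableSet
  simpa using h

def splitMap (m n : ℕ) :
    EuclideanSpace ℝ (Fin (m + n)) → EuclideanSpace ℝ (Fin m) × EuclideanSpace ℝ (Fin n) :=
  fun x => ((WithLp.toLp 2 (fun i => x (Fin.castAdd n i)) : EuclideanSpace ℝ (Fin m)),
    (WithLp.toLp 2 (fun i => x (Fin.natAdd m i)) : EuclideanSpace ℝ (Fin n)))

lemma continuous_splitMap (m n : ℕ) : Continuous (splitMap m n) := by
  unfold splitMap
  apply Continuous.prodMk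
  · exact (PiLp.continuous_toLp 2 _).comp (continuous_pi fun i =>
      (continuous_apply (Fin.castAdd n i)).comp (PiLp.continuous_ofLp 2 (fun _ : Fin (m+n) => ℝ)))
  · exact (PiLp.continuous_toLp 2 _).comp (continuous_pi fun i =>
      (continuous_apply (Fin.natAdd m i)).comp (PiLp.continuous_ofLp 2 (fun _ : Fin (m+n) => ℝ)))

lemma isLinearMap_splitMap (m n : ℕ) : IsLinearMap ℝ (splitMap m n) := by
  constructor
  · intro x y; ext i <;> simp [splitMap]
  · intro c x; ext i <;> simp [splitMap]

lemma splitMap_eq (m n : ℕ) :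
    splitMap m n =
      (Prod.map ((MeasurableEquiv.toLp 2 (Fin m → ℝ)).symm).symm
          ((MeasurableEquiv.toLp 2 (Fin n → ℝ)).symm).symm) ∘
        (MeasurableEquiv.sumPiEquivProdPi (fun _ : Fin m ⊕ Fin n => ℝ)) ∘
          (MeasurableEquiv.piCongrLeft (fun _ : Fin (m + n) => ℝ) finSumFinEquiv).symm ∘
            ((MeasurableEquiv.toLp 2 (Fin (m + n) → ℝ)).symm) := by
  funext x
  refine Prod.ext ?_ ?_ <;> ext i <;>
    simp [splitMap, MeasurableEquiv.sumPiEquivProdPi, MeasurableEquiv.piCongrLeft,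
      Equiv.piCongrLeft, MeasurableEquiv.coe_toLp_symm,
      MeasurableEquiv.coe_toLp]

lemma measurePreserving_splitMap (m n : ℕ) :
    MeasurePreserving (splitMap m n) (stdGaussian (m + n))
      ((stdGaussian m).prod (stdGaussian n)) := by
  rw [splitMap_eq]
  have h1 := measurePreserving_stdGaussian (m + n)
  have h2 := (measurePreserving_piCongrLeft (fun _ : Fin (m + n) => g1) finSumFinEquiv).symm
  have h3 := measurePreserving_sumPiEquivProdPi (fun _ : Fin m ⊕ Fin n => g1)
  have h4 := ((measurePreserving_stdGaussian m).symm).prod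
    ((measurePreserving_stdGaussian n).symm)
  exact h4.comp (h3.comp (h2.comp h1))

lemma stdGaussian_splitMap_prod (m n : ℕ) {A : Set (EuclideanSpace ℝ (Fin m))}
    {B : Set (EuclideanSpace ℝ (Fin n))} (hA : MeasurableSet A) (hB : MeasurableSet B) :
    stdGaussian (m + n) (splitMap m n ⁻¹' (A ×ˢ B)) = stdGaussian m A * stdGaussian n B := by
  rw [(measurePreserving_splitMap m n).measure_preimage (hA.prod hB).nullMeasurableSet,
    Measure.prod_prod]

def iterDim (n : ℕ) : ℕ → ℕ
  | 0 => 0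
  | N + 1 => iterDim n N + n

lemma iterDim_eq (n N : ℕ) : iterDim n N = N * n := by
  induction N with
  | zero => simp [iterDim]
  | succ N ih => rw [iterDim, ih, Nat.succ_mul]

def iterSet (n : ℕ) (A : Set (EuclideanSpace ℝ (Fin n))) :
    (N : ℕ) → Set (EuclideanSpace ℝ (Fin (iterDim n N)))
  | 0 => Set.univ
  | N + 1 => splitMap (iterDim n N) n ⁻¹' ((iterSet n A N) ×ˢ A)

lemma iterSet_isClosed {n : ℕ} {A : Set (EuclideanSpace ℝ (Fin n))} (hA : IsClosed A) :
    ∀ N, IsClosed (iterSet n A N)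
  | 0 => isClosed_univ
  | N + 1 => ((iterSet_isClosed hA N).prod hA).preimage (continuous_splitMap _ _)

lemma iterSet_convex {n : ℕ} {A : Set (EuclideanSpace ℝ (Fin n))} (hA : Convex ℝ A) :
    ∀ N, Convex ℝ (iterSet n A N)
  | 0 => convex_univ
  | N + 1 => ((iterSet_convex hA N).prod hA).is_linear_preimage
      (isLinearMap_splitMap (iterDim n N) n)

lemma iterSet_symm {n : ℕ} {A : Set (EuclideanSpace ℝ (Fin n))} (hA : ∀ x ∈ A, -x ∈ A) :
    ∀ N, ∀ x ∈ iterSet n A N, -x ∈ iterSet n A N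
  | 0 => fun x _ => Set.mem_univ _
  | N + 1 => by
      intro x hx
      have h1 : splitMap (iterDim n N) n (-x) = -(splitMap (iterDim n N) n x) :=
        (isLinearMap_splitMap (iterDim n N) n).map_neg x
      simp only [iterSet, Set.mem_preimage] at hx ⊢
      change splitMap (iterDim n N) n x ∈ iterSet n A N ×ˢ A at hx
      show splitMap (iterDim n N) n (-x) ∈ iterSet n A N ×ˢ A
      rw [h1]
      exact ⟨iterSet_symm hA N _ hx.1, hA _ hx.2⟩

lemma iterSet_inter {n : ℕ} (A B : Set (EuclideanSpace ℝ (Fin n))) :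
    ∀ N, iterSet n (A ∩ B) N = iterSet n A N ∩ iterSet n B N
  | 0 => (Set.univ_inter _).symm.trans rfl
  | N + 1 => by
      simp only [iterSet, iterSet_inter A B N, ← Set.preimage_inter, Set.prod_inter_prod]
      ext x
      change splitMap (iterDim n N) n x ∈ (iterSet n A N ∩ iterSet n B N) ×ˢ (A ∩ B) ↔
        splitMap (iterDim n N) n x ∈ iterSet n A N ×ˢ A ∧
          splitMap (iterDim n N) n x ∈ iterSet n B N ×ˢ B
      simp only [Set.mem_inter_iff, Set.mem_prod]; tauto

lemma iterSet_measurableSet {n : ℕ} {A : Set (EuclideanSpace ℝ (Fin n))}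
    (hA : MeasurableSet A) : ∀ N, MeasurableSet (iterSet n A N)
  | 0 => MeasurableSet.univ
  | N + 1 => ((iterSet_measurableSet hA N).prod hA).preimage
      (continuous_splitMap _ _).measurable

lemma iterSet_measure {n : ℕ} {A : Set (EuclideanSpace ℝ (Fin n))} (hA : MeasurableSet A) :
    ∀ N, stdGaussian (iterDim n N) (iterSet n A N) = (stdGaussian n A) ^ N
  | 0 => by simp [iterSet]
  | N + 1 => by
      show stdGaussian (iterDim n N + n)
        (splitMap (iterDim n N) n ⁻¹' ((iterSet n A N) ×ˢ A)) = _
      rw [stdGaussian_splitMap_prod _ _ (iterSet_measurableSet hA N) hA,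
        iterSet_measure hA N, pow_succ]

lemma tendsto_aux (c : ℕ → ℝ) (hc : ∀ k, 0 < c k)
    (hlim : Filter.Tendsto (fun k => (c k) ^ ((1 : ℝ) / k)) Filter.atTop (nhds 1)) (n : ℕ) :
    Filter.Tendsto (fun N : ℕ => (c (N * n)) ^ ((1 : ℝ) / N)) Filter.atTop (nhds 1) := by
  rcases Nat.eq_zero_or_pos n with hn | hn
  · subst hn
    simp only [Nat.mul_zero]
    have h0 : Filter.Tendsto (fun N : ℕ => (1 : ℝ) / N) Filter.atTop (nhds 0) :=
      tendsto_one_div_atTop_nhds_zero_nat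
    have := Filter.Tendsto.rpow (tendsto_const_nhds (x := c 0)) h0 (Or.inl (hc 0).ne')
    simpa using this
  · have hmul : Filter.Tendsto (fun N : ℕ => N * n) Filter.atTop Filter.atTop :=
      Filter.tendsto_atTop_mono (fun N => Nat.le_mul_of_pos_right N hn) Filter.tendsto_id
    have base := hlim.comp hmul
    have hpow := base.pow n
    rw [one_pow] at hpow
    refine hpow.congr' ?_
    filter_upwards [Filter.eventually_ge_atTop 1] with N hN
    have hNne : (N : ℝ) ≠ 0 := Nat.cast_ne_zero.mpr (Nat.one_le_iff_ne_zero.mp hN)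
    have hnne : (n : ℝ) ≠ 0 := Nat.cast_ne_zero.mpr hn.ne'
    show (c (N * n) ^ ((1 : ℝ) / (N * n : ℕ))) ^ n = c (N * n) ^ ((1 : ℝ) / N)
    rw [← Real.rpow_natCast (c (N * n) ^ ((1 : ℝ) / (N * n : ℕ))) n,
      ← Real.rpow_mul (hc _).le]
    congr 1
    push_cast
    field_simp

lemma rpow_trick {a b cc : ℝ} (ha : 0 ≤ a) (hb : 0 ≤ b) (hcc : 0 < cc) {N : ℕ} (hN : N ≠ 0)
    (h : cc * b ^ N ≤ a ^ N) : cc ^ ((1 : ℝ) / N) * b ≤ a := by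
  have e1 : ∀ x : ℝ, 0 ≤ x → (x ^ N) ^ ((1 : ℝ) / N) = x := fun x hx => by
    rw [← Real.rpow_natCast x N, ← Real.rpow_mul hx,
      mul_one_div_cancel (Nat.cast_ne_zero.mpr hN), Real.rpow_one]
  have h1 : (cc * b ^ N) ^ ((1 : ℝ) / N) ≤ (a ^ N) ^ ((1 : ℝ) / N) :=
    Real.rpow_le_rpow (by positivity) h (by positivity)
  rwa [Real.mul_rpow hcc.le (by positivity), e1 b hb, e1 a ha] at h1

end StdGaussianAux

open StdGaussianAux

theorem stmt_5 (c : ℕ → ℝ) (hc : ∀ n, 0 < c n)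
    (hlim : Filter.Tendsto (fun n => (c n) ^ ((1 : ℝ) / n)) Filter.atTop (nhds 1))
    (H : ∀ (n : ℕ) (A B : Set (EuclideanSpace ℝ (Fin n))),
      IsClosed A → Convex ℝ A → (∀ x ∈ A, -x ∈ A) →
      IsClosed B → Convex ℝ B → (∀ x ∈ B, -x ∈ B) →
      stdGaussian n (A ∩ B) ≥ ENNReal.ofReal (c n) * (stdGaussian n A * stdGaussian n B)) :
    ∀ (n : ℕ) (A B : Set (EuclideanSpace ℝ (Fin n))),
      IsClosed A → Convex ℝ A → (∀ x ∈ A, -x ∈ A) →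
      IsClosed B → Convex ℝ B → (∀ x ∈ B, -x ∈ B) →
      stdGaussian n (A ∩ B) ≥ stdGaussian n A * stdGaussian n B := by
  intro n A B hAc hAcv hAs hBc hBcv hBs
  set x := stdGaussian n (A ∩ B) with hx
  set y := stdGaussian n A with hy
  set z := stdGaussian n B with hz
  have hxt : x ≠ ⊤ := measure_ne_top _ _
  have hyt : y ≠ ⊤ := measure_ne_top _ _
  have hzt : z ≠ ⊤ := measure_ne_top _ _
  have hH : ∀ N : ℕ, ENNReal.ofReal (c (N * n)) * (y * z) ^ N ≤ x ^ N := by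
    intro N
    have h := H (iterDim n N) (iterSet n A N) (iterSet n B N)
      (iterSet_isClosed hAc N) (iterSet_convex hAcv N) (iterSet_symm hAs N)
      (iterSet_isClosed hBc N) (iterSet_convex hBcv N) (iterSet_symm hBs N)
    rw [← iterSet_inter A B N, iterSet_measure (hAc.inter hBc).measurableSet N,
      iterSet_measure hAc.measurableSet N, iterSet_measure hBc.measurableSet N,
      iterDim_eq] at h
    calc ENNReal.ofReal (c (N * n)) * (y * z) ^ N
        = ENNReal.ofReal (c (N * n)) * (y ^ N * z ^ N) := by rw [mul_pow]
      _ ≤ x ^ N := h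
  have hreal : ∀ N : ℕ, N ≠ 0 →
      (c (N * n)) ^ ((1 : ℝ) / N) * (y.toReal * z.toReal) ≤ x.toReal := by
    intro N hN
    have h2 : (ENNReal.ofReal (c (N * n)) * (y * z) ^ N).toReal ≤ (x ^ N).toReal :=
      ENNReal.toReal_mono (ENNReal.pow_ne_top hxt) (hH N)
    rw [ENNReal.toReal_mul, ENNReal.toReal_ofReal (hc _).le, ENNReal.toReal_pow,
      ENNReal.toReal_mul, ENNReal.toReal_pow] at h2
    exact rpow_trick ENNReal.toReal_nonneg (by positivity) (hc _) hN h2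
  have hT := tendsto_aux c hc hlim n
  have hT2 : Filter.Tendsto (fun N : ℕ => (c (N * n)) ^ ((1 : ℝ) / N) * (y.toReal * z.toReal))
      Filter.atTop (nhds (1 * (y.toReal * z.toReal))) := hT.mul_const _
  rw [one_mul] at hT2
  have hle : y.toReal * z.toReal ≤ x.toReal :=
    le_of_tendsto hT2 (Filter.eventually_atTop.mpr
      ⟨1, fun N hN => hreal N (Nat.one_le_iff_ne_zero.mp hN)⟩)
  have hfinal : y * z ≤ x := by
    rw [← ENNReal.toReal_le_toReal (ENNReal.mul_ne_top hyt hzt) hxt, ENNReal.toReal_mul]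
    exact hle
  exact hfinal
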